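/- Let ε > 0 and let λ : (0,∞) → (0,∞) satisfy lim_{t→∞} λ(t) = 0 and lim_{t→∞} (t + ln(λ(t)ε²)) = ∞. Let ρ : (0,∞) → ℝ satisfy ρ(t) → ∞ and ln(λ(t)ε²) + ρ(t) ≤ 0 for all t. Set σ_t := 1/cosh(ε√(2λ(t))) and s(t) := t + ln(λ(t)ε²) + ρ(t). Then for every θ > 0, taking γ_t := −θ/(1 + e^{ρ(t)}), lim_{t→∞} (1 − σ_t(1−e^{−t})) / ( e^{−γ_t}(1 − σ_t(1 − e^{−t+s(t)})) − σ_t(e^{s(t)−t} − e^{−t}) ) = 1/(1+θ). -/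

import Mathlib

open Filter Real

private lemma slope_lim {f : ℝ → ℝ} (hf : HasDerivAt f 1 0) (hf0 : f 0 = 0) :
    Tendsto (fun x => f x / x) (nhdsWithin 0 {(0:ℝ)}ᶜ) (nhds 1) := by
  have h := hasDerivAt_iff_tendsto_slope.mp hf
  refine h.congr fun y => ?_
  simp [slope_fun_def, hf0, div_eq_mul_inv, mul_comm]

private lemma exp_slope : Tendsto (fun x => (Real.exp x - 1) / x)
    (nhdsWithin 0 {(0:ℝ)}ᶜ) (nhds 1) :=
  slope_lim (by simpa using (Real.hasDerivAt_exp 0).sub_const 1) (by simp)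

private lemma sinh_slope : Tendsto (fun x => Real.sinh x / x)
    (nhdsWithin 0 {(0:ℝ)}ᶜ) (nhds 1) :=
  slope_lim (by simpa using Real.hasDerivAt_sinh 0) (by simp)

private lemma cosh_slope : Tendsto (fun x => (Real.cosh x - 1) / x ^ 2 * (2 / Real.cosh x))
    (nhdsWithin 0 {(0:ℝ)}ᶜ) (nhds 1) := by
  have hcosh : Tendsto (fun x : ℝ => Real.cosh x) (nhdsWithin 0 {(0:ℝ)}ᶜ) (nhds 1) := by
    have := (Real.continuous_cosh.tendsto 0)
    simpa using this.mono_left nhdsWithin_le_nhds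
  have hc1 : Tendsto (fun x : ℝ => Real.cosh x + 1) (nhdsWithin 0 {(0:ℝ)}ᶜ) (nhds 2) := by
    have := hcosh.add (tendsto_const_nhds (x := (1:ℝ)))
    rw [show (2:ℝ) = 1 + 1 by norm_num]
    exact this
  have h1 : Tendsto (fun x => (Real.cosh x - 1) / x ^ 2)
      (nhdsWithin 0 {(0:ℝ)}ᶜ) (nhds (1/2)) := by
    have key : Tendsto (fun x => (Real.sinh x / x) ^ 2 / (Real.cosh x + 1))
        (nhdsWithin 0 {(0:ℝ)}ᶜ) (nhds (1/2)) := by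
      have := (sinh_slope.pow 2).div hc1 (by norm_num)
      rw [show (1:ℝ)/2 = 1 ^ 2 / 2 by norm_num]
      exact this
    refine key.congr' ?_
    filter_upwards [self_mem_nhdsWithin] with x hx
    have hx0 : x ≠ 0 := hx
    have hc : Real.cosh x + 1 ≠ 0 := by positivity
    field_simp
    nlinarith [Real.sinh_sq x]
  have h2 : Tendsto (fun x : ℝ => 2 / Real.cosh x) (nhdsWithin 0 {(0:ℝ)}ᶜ) (nhds 2) := by
    have := (tendsto_const_nhds (x := (2:ℝ))).div hcosh one_ne_zero
    rw [div_one] at this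
    exact this
  have := h1.mul h2
  simpa using this

/-- Theorem 5.2(iii): with `ρ(t) → ∞`, `ln(λ(t)ε²) + ρ(t) ≤ 0`, and `γ_t = -θ/(1+e^{ρ(t)})`,
the Laplace transform of the rescaled particle number at time `s(t) = t + ln(λ(t)ε²) + ρ(t)`
converges to `1/(1+θ)`. -/
theorem stmt9 (ε : ℝ) (hε : 0 < ε) (lam : ℝ → ℝ) (hpos : ∀ t > (0 : ℝ), 0 < lam t)
    (h0 : Filter.Tendsto lam Filter.atTop (nhds 0))
    (h1 : Filter.Tendsto (fun t => t + Real.log (lam t * ε ^ 2)) Filter.atTop Filter.atTop)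
    (ρ : ℝ → ℝ) (hρ : Filter.Tendsto ρ Filter.atTop Filter.atTop)
    (hρle : ∀ t > (0 : ℝ), Real.log (lam t * ε ^ 2) + ρ t ≤ 0)
    (σ : ℝ → ℝ) (hσ : ∀ t, σ t = 1 / Real.cosh (ε * Real.sqrt (2 * lam t)))
    (s : ℝ → ℝ) (hs : ∀ t, s t = t + Real.log (lam t * ε ^ 2) + ρ t)
    (θ : ℝ) (hθ : 0 < θ)
    (γ : ℝ → ℝ) (hγ : ∀ t, γ t = -θ / (1 + Real.exp (ρ t))) :
    Filter.Tendsto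
      (fun t => (1 - σ t * (1 - Real.exp (-t))) /
        (Real.exp (-γ t) * (1 - σ t * (1 - Real.exp (-t + s t)))
          - σ t * (Real.exp (s t - t) - Real.exp (-t))))
      Filter.atTop (nhds (1 / (1 + θ))) := by
  obtain ⟨a, ha_def⟩ : ∃ a : ℝ → ℝ, a = fun t => ε * Real.sqrt (2 * lam t) := ⟨_, rfl⟩
  obtain ⟨U, hU_def⟩ : ∃ U : ℝ → ℝ,
    U = fun t => (Real.cosh (a t) - 1) / (a t) ^ 2 * (2 / Real.cosh (a t)) := ⟨_, rfl⟩
  obtain ⟨V, hV_def⟩ : ∃ V : ℝ → ℝ,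
    V = fun t => Real.exp (-(t + Real.log (lam t * ε ^ 2))) := ⟨_, rfl⟩
  obtain ⟨W, hW_def⟩ : ∃ W : ℝ → ℝ, W = fun t => Real.exp (ρ t) := ⟨_, rfl⟩
  obtain ⟨E, hE_def⟩ : ∃ E : ℝ → ℝ, E = fun t => Real.exp (θ / (1 + W t)) := ⟨_, rfl⟩
  have hat_eq : ∀ t, a t = ε * Real.sqrt (2 * lam t) := fun t => by rw [ha_def]
  -- basic limits
  have ha0 : Tendsto a atTop (nhds 0) := by
    have h2 : Tendsto (fun t => 2 * lam t) atTop (nhds 0) := by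
      simpa using h0.const_mul 2
    have hsq : Tendsto (fun t => Real.sqrt (2 * lam t)) atTop (nhds 0) := by
      have := (Real.continuous_sqrt.tendsto 0).comp h2
      simpa only [Function.comp_def, Real.sqrt_zero] using this
    have := hsq.const_mul ε
    rw [ha_def]
    simpa only [mul_zero] using this
  have ha : Tendsto a atTop (nhdsWithin 0 {(0:ℝ)}ᶜ) := by
    rw [tendsto_nhdsWithin_iff]
    refine ⟨ha0, ?_⟩
    filter_upwards [eventually_gt_atTop 0] with t ht
    have h1 : 0 < Real.sqrt (2 * lam t) := Real.sqrt_pos.mpr (by linarith [hpos t ht])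
    have h2 : 0 < a t := by rw [hat_eq]; positivity
    exact ne_of_gt h2
  have hU : Tendsto U atTop (nhds 1) := by
    rw [hU_def]
    exact cosh_slope.comp ha
  have hV : Tendsto V atTop (nhds 0) := by
    have hneg : Tendsto (fun t => -(t + Real.log (lam t * ε ^ 2))) atTop atBot :=
      tendsto_neg_atBot_iff.mpr h1
    rw [hV_def]
    exact Real.tendsto_exp_atBot.comp hneg
  have hW : Tendsto W atTop atTop := by
    rw [hW_def]
    exact Real.tendsto_exp_atTop.comp hρ
  have hWpos : ∀ t, 0 < 1 + W t := fun t => by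
    have : 0 < W t := hW_def ▸ Real.exp_pos _
    linarith
  have hinv : Tendsto (fun t => 1 / (1 + W t)) atTop (nhds 0) := by
    have h' : Tendsto (fun t => 1 + W t) atTop atTop := tendsto_atTop_add_const_left _ 1 hW
    have := tendsto_inv_atTop_zero.comp h'
    simpa only [Function.comp_def, one_div] using this
  have hx0 : Tendsto (fun t => θ / (1 + W t)) atTop (nhds 0) := by
    have := hinv.const_mul θ
    simpa only [mul_one_div, mul_zero] using this
  have hE : Tendsto E atTop (nhds 1) := by
    rw [hE_def]
    have := (Real.continuous_exp.tendsto 0).comp hx0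
    simpa [Function.comp_def] using this
  have hσl : Tendsto σ atTop (nhds 1) := by
    have hcosh : Tendsto (fun t => Real.cosh (a t)) atTop (nhds 1) := by
      have := (Real.continuous_cosh.tendsto 0).comp ha0
      simpa [Function.comp_def] using this
    have h'' : Tendsto (fun t => 1 / Real.cosh (a t)) atTop (nhds (1 / 1)) :=
      tendsto_const_nhds.div hcosh one_ne_zero
    rw [show (1:ℝ)/1 = 1 by norm_num] at h''
    refine h''.congr fun t => ?_
    rw [hσ, hat_eq t]
    
  -- W * (E - 1) → θ
  have hWE : Tendsto (fun t => W t * (E t - 1)) atTop (nhds θ) := by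
    have hxne : Tendsto (fun t => θ / (1 + W t)) atTop (nhdsWithin 0 {(0:ℝ)}ᶜ) := by
      rw [tendsto_nhdsWithin_iff]
      exact ⟨hx0, Eventually.of_forall fun t => ne_of_gt (div_pos hθ (hWpos t))⟩
    have hq : Tendsto (fun t => (E t - 1) / (θ / (1 + W t))) atTop (nhds 1) := by
      rw [hE_def]
      exact exp_slope.comp hxne
    have hxw : Tendsto (fun t => θ / (1 + W t) * W t) atTop (nhds θ) := by
      have h' : Tendsto (fun t => θ * (1 - 1 / (1 + W t))) atTop (nhds (θ * (1 - 0))) :=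
        (tendsto_const_nhds.sub hinv).const_mul θ
      have h'' : Tendsto (fun t => θ * (1 - 1 / (1 + W t))) atTop (nhds θ) := by
        simpa using h'
      refine h''.congr fun t => ?_
      have h1w : (1 + W t) ≠ 0 := (hWpos t).ne'
      field_simp
      ring
    have hprod := hq.mul hxw
    have hprod' : Tendsto (fun t => (E t - 1) / (θ / (1 + W t)) * (θ / (1 + W t) * W t))
        atTop (nhds θ) := by simpa using hprod
    refine hprod'.congr fun t => ?_
    have hxne' : θ / (1 + W t) ≠ 0 := ne_of_gt (div_pos hθ (hWpos t))
    rw [← mul_assoc, div_mul_cancel₀ _ hxne']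
    ring
  -- limit of the simplified expression
  have hden : Tendsto (fun t => E t * U t + σ t * (W t * (E t - 1)) + σ t * V t)
      atTop (nhds (1 + θ)) := by
    have := ((hE.mul hU).add (hσl.mul hWE)).add (hσl.mul hV)
    simpa using this
  have hnum : Tendsto (fun t => U t + σ t * V t) atTop (nhds 1) := by
    have := hU.add (hσl.mul hV)
    simpa using this
  have hmain : Tendsto (fun t => (U t + σ t * V t) /
      (E t * U t + σ t * (W t * (E t - 1)) + σ t * V t)) atTop (nhds (1 / (1 + θ))) :=
    hnum.div hden (by positivity)
  -- eventual equality
  refine hmain.congr' ?_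
  filter_upwards [eventually_gt_atTop 0] with t ht
  have hlam := hpos t ht
  have hc : 0 < lam t * ε ^ 2 := by positivity
  have hsqrt : 0 < Real.sqrt (2 * lam t) := Real.sqrt_pos.mpr (by linarith)
  have ha2 : (ε * Real.sqrt (2 * lam t)) ^ 2 = 2 * (lam t * ε ^ 2) := by
    rw [mul_pow, Real.sq_sqrt (by linarith : (0:ℝ) ≤ 2 * lam t)]
    ring
  have hch : 0 < Real.cosh (ε * Real.sqrt (2 * lam t)) := Real.cosh_pos _
  -- key pointwise identities
  have hUc : (lam t * ε ^ 2) * U t = 1 - σ t := by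
    rw [hU_def, hσ]
    simp only [hat_eq t]
    rw [ha2]
    field_simp
  have hexpt : Real.exp (-t) = (lam t * ε ^ 2) * V t := by
    have hv : V t = Real.exp (-t) / (lam t * ε ^ 2) := by
      rw [hV_def]
      simp only
      rw [show -(t + Real.log (lam t * ε ^ 2)) = (-t) - Real.log (lam t * ε ^ 2) by ring,
        Real.exp_sub, Real.exp_log hc]
    rw [hv]
    field_simp
  have hexpst : Real.exp (s t - t) = (lam t * ε ^ 2) * W t := by
    have hst : s t - t = Real.log (lam t * ε ^ 2) + ρ t := by rw [hs]; ring
    rw [hst, Real.exp_add, Real.exp_log hc, hW_def]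
  have hexpst' : Real.exp (-t + s t) = (lam t * ε ^ 2) * W t := by
    rw [show -t + s t = s t - t by ring, hexpst]
  have hexpg : Real.exp (-γ t) = E t := by
    rw [hγ, hE_def]
    simp only [neg_div, neg_neg, hW_def]
  -- the two sides
  have hNeq : 1 - σ t * (1 - Real.exp (-t)) = (lam t * ε ^ 2) * (U t + σ t * V t) := by
    rw [hexpt]
    linear_combination -hUc
  have hDeq : Real.exp (-γ t) * (1 - σ t * (1 - Real.exp (-t + s t)))
      - σ t * (Real.exp (s t - t) - Real.exp (-t)) =
      (lam t * ε ^ 2) * (E t * U t + σ t * (W t * (E t - 1)) + σ t * V t) := by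
    rw [hexpg, hexpst, hexpst', hexpt]
    linear_combination -(E t) * hUc
  rw [hNeq, hDeq, mul_div_mul_left _ _ (ne_of_gt hc)]
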